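/- Let S ⊆ [0, ∞) be closed with complement S* = [0, ∞) \ S open and additive, S bounded with L = sup S, and h_S defined as the signed distance to ∂S (positive on interior of S, negative on S*, zero on ∂S), restricted to [0, L]. Then for every s* ∈ S* and every x with 0 ≤ x < x + s* ≤ L, we have h_S(x + s*) < h_S(x). -/
import Mathlib


theorem hopf_strict_decrease (S Sstar : Set ℝ) (hSclosed : IsClosed S)
    (hSsub : S ⊆ Set.Ici 0) (hSstar : Sstar = Set.Ici (0 : ℝ) \ S)
    (hopen : IsOpen Sstar) (hadd : ∀ p ∈ Sstar, ∀ q ∈ Sstar, p + q ∈ Sstar)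
    (hne : S.Nonempty) (hbdd : BddAbove S) (L : ℝ) (hL : L = sSup S)
    (hS : ℝ → ℝ)
    (hdef_bd : ∀ x ∈ frontier S, hS x = 0)
    (hdef_int : ∀ x ∈ interior S, hS x = Metric.infDist x (frontier S))
    (hdef_star : ∀ x ∈ Sstar, hS x = -Metric.infDist x (frontier S)) :
    ∀ sstar ∈ Sstar, ∀ x : ℝ, 0 ≤ x → x < x + sstar → x + sstar ≤ L →
      hS (x + sstar) < hS x := by
  intro sstar hsstar x hx hlt hxL
  have hspos : 0 < sstar := by linarith
  have hdisj : ∀ y, y ∈ Sstar → y ∉ S := by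
    intro y hy; rw [hSstar] at hy; exact hy.2
  have hmemStar : ∀ y : ℝ, 0 ≤ y → y ∉ S → y ∈ Sstar := by
    intro y h1 h2; rw [hSstar]; exact ⟨h1, h2⟩
  have hFsubS : frontier S ⊆ S := hSclosed.frontier_subset
  have hSnn : ∀ y ∈ S, (0:ℝ) ≤ y := fun y hy => hSsub hy
  -- 0 ∈ S
  have h0S : (0:ℝ) ∈ S := by
    by_contra h0
    have hbb : BddBelow S := ⟨0, fun y hy => hSnn y hy⟩
    have hm : sInf S ∈ S := hSclosed.csInf_mem hne hbb
    have hm0 : 0 ≤ sInf S := le_csInf hne (fun y hy => hSnn y hy)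
    have hmpos : 0 < sInf S := lt_of_le_of_ne hm0 (fun h => h0 (h ▸ hm))
    have hhalf : sInf S / 2 ∈ Sstar := by
      refine hmemStar _ (by linarith) (fun h => ?_)
      have := csInf_le hbb h
      linarith
    have h2 := hadd _ hhalf _ hhalf
    rw [show sInf S / 2 + sInf S / 2 = sInf S by ring] at h2
    exact hdisj _ h2 hm
  have h0F : (0:ℝ) ∈ frontier S := by
    rw [frontier_eq_closure_inter_closure]
    refine ⟨subset_closure h0S, ?_⟩
    rw [Metric.mem_closure_iff]
    intro ε hε
    refine ⟨-(ε/2), fun h => ?_, ?_⟩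
    · have := hSnn _ h; linarith
    · rw [Real.dist_eq]
      have h1 : (0:ℝ) - -(ε/2) = ε/2 := by ring
      rw [h1, abs_of_nonneg (by linarith)]
      linarith
  have hFne : (frontier S).Nonempty := ⟨0, h0F⟩
  have hFcl : IsClosed (frontier S) := isClosed_frontier
  -- translation lemma
  have hT : ∀ z : ℝ, z ∈ closure Sstar → z + sstar ∈ Sstar := by
    intro z hz
    obtain ⟨ε, hε, hball⟩ := Metric.isOpen_iff.mp hopen sstar hsstar
    obtain ⟨u, hu, hud⟩ := Metric.mem_closure_iff.mp hz ε hε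
    have hq : z + sstar - u ∈ Sstar := by
      apply hball
      rw [Metric.mem_ball, Real.dist_eq]
      rw [show z + sstar - u - sstar = z - u by ring]
      rw [Real.dist_eq] at hud
      exact hud
    have h2 := hadd u hu _ hq
    rwa [show u + (z + sstar - u) = z + sstar by ring] at h2
  -- crossing lemmas
  have crossL : ∀ u v : ℝ, u < v → u ∉ S → v ∈ S → ∃ g ∈ frontier S, u < g ∧ g ≤ v := by
    intro u v huv hu hv
    have hTcl : IsClosed (S ∩ Set.Icc u v) := hSclosed.inter isClosed_Icc
    have hTne : (S ∩ Set.Icc u v).Nonempty := ⟨v, hv, le_of_lt huv, le_refl v⟩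
    have hTbdd : BddBelow (S ∩ Set.Icc u v) := ⟨u, fun y hy => hy.2.1⟩
    have hgT : sInf (S ∩ Set.Icc u v) ∈ S ∩ Set.Icc u v := hTcl.csInf_mem hTne hTbdd
    set g := sInf (S ∩ Set.Icc u v) with hg
    have hgu : u < g := lt_of_le_of_ne hgT.2.1 (fun h => hu (h ▸ hgT.1))
    refine ⟨g, ?_, hgu, hgT.2.2⟩
    rw [hSclosed.frontier_eq]
    refine ⟨hgT.1, fun hint => ?_⟩
    obtain ⟨δ, hδ, hball⟩ := Metric.isOpen_iff.mp isOpen_interior g hint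
    set w := max u (g - δ/2) with hw
    have hwg : w < g := max_lt hgu (by linarith)
    have hw2 : g - δ/2 ≤ w := le_max_right _ _
    have hwS : w ∈ S := by
      apply interior_subset
      apply hball
      rw [Metric.mem_ball, Real.dist_eq, abs_of_nonpos (by linarith : w - g ≤ 0)]
      linarith
    have hwT : w ∈ S ∩ Set.Icc u v := ⟨hwS, le_max_left _ _, le_trans (le_of_lt hwg) hgT.2.2⟩
    have h3 := csInf_le hTbdd hwT
    rw [← hg] at h3
    linarith
  have crossR : ∀ u v : ℝ, u < v → u ∈ S → v ∉ S → ∃ g ∈ frontier S, u ≤ g ∧ g < v := by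
    intro u v huv hu hv
    have hTcl : IsClosed (S ∩ Set.Icc u v) := hSclosed.inter isClosed_Icc
    have hTne : (S ∩ Set.Icc u v).Nonempty := ⟨u, hu, le_refl u, le_of_lt huv⟩
    have hTbdd : BddAbove (S ∩ Set.Icc u v) := ⟨v, fun y hy => hy.2.2⟩
    have hgT : sSup (S ∩ Set.Icc u v) ∈ S ∩ Set.Icc u v := hTcl.csSup_mem hTne hTbdd
    set g := sSup (S ∩ Set.Icc u v) with hg
    have hgv : g < v := lt_of_le_of_ne hgT.2.2 (fun h => hv (h ▸ hgT.1))
    refine ⟨g, ?_, hgT.2.1, hgv⟩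
    rw [hSclosed.frontier_eq]
    refine ⟨hgT.1, fun hint => ?_⟩
    obtain ⟨δ, hδ, hball⟩ := Metric.isOpen_iff.mp isOpen_interior g hint
    set w := min v (g + δ/2) with hw
    have hwg : g < w := lt_min hgv (by linarith)
    have hw2 : w ≤ g + δ/2 := min_le_right _ _
    have hwS : w ∈ S := by
      apply interior_subset
      apply hball
      rw [Metric.mem_ball, Real.dist_eq, abs_of_nonneg (by linarith : 0 ≤ w - g)]
      linarith
    have hwT : w ∈ S ∩ Set.Icc u v := ⟨hwS, le_trans hgT.2.1 (le_of_lt hwg), min_le_left _ _⟩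
    have h3 := le_csSup hTbdd hwT
    rw [← hg] at h3
    linarith
  -- no S point strictly inside the ball around a point not in S
  have noS : ∀ a w : ℝ, a ∉ S → dist a w < Metric.infDist a (frontier S) → w ∉ S := by
    intro a w ha hd hw
    rcases lt_trichotomy w a with h | h | h
    · obtain ⟨g, hgF, hg1, hg2⟩ := crossR w a h hw ha
      have h3 := Metric.infDist_le_dist_of_mem (x := a) hgF
      have h4 : dist a g = a - g := by
        rw [Real.dist_eq, abs_of_nonneg (by linarith)]
      have h5 : dist a w = a - w := by
        rw [Real.dist_eq, abs_of_nonneg (by linarith)]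
      rw [h4] at h3
      rw [h5] at hd
      linarith
    · exact ha (h ▸ hw)
    · obtain ⟨g, hgF, hg1, hg2⟩ := crossL a w h ha hw
      have h3 := Metric.infDist_le_dist_of_mem (x := a) hgF
      have h4 : dist a g = g - a := by
        rw [Real.dist_eq, abs_of_nonpos (by linarith : a - g ≤ 0)]; ring
      have h5 : dist a w = w - a := by
        rw [Real.dist_eq, abs_of_nonpos (by linarith : a - w ≤ 0)]; ring
      rw [h4] at h3
      rw [h5] at hd
      linarith
  -- closed ball around a Sstar point, intersected with [0,∞), is in closure Sstar
  have hclb : ∀ a z : ℝ, a ∈ Sstar → 0 ≤ z → |z - a| ≤ Metric.infDist a (frontier S) →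
      z ∈ closure Sstar := by
    intro a z ha hz0 hle
    have haS : a ∉ S := hdisj a ha
    have haNN : 0 ≤ a := by rw [hSstar] at ha; exact ha.1
    rcases lt_trichotomy z a with h | h | h
    · rw [Metric.mem_closure_iff]
      intro ε hε
      set w := z + min (ε/2) ((a - z)/2) with hw
      have hmpos : 0 < min (ε/2) ((a-z)/2) := lt_min (by linarith) (by linarith)
      have hm1 : min (ε/2) ((a-z)/2) ≤ ε/2 := min_le_left _ _
      have hm2 : min (ε/2) ((a-z)/2) ≤ (a-z)/2 := min_le_right _ _
      have hw1 : z < w := by simp only [hw]; linarith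
      have hw2 : w < a := by simp only [hw]; linarith
      have hwn : w ∉ S := by
        apply noS a w haS
        rw [Real.dist_eq, abs_of_nonneg (by linarith : (0:ℝ) ≤ a - w)]
        rw [abs_of_nonpos (by linarith : z - a ≤ 0)] at hle
        linarith
      refine ⟨w, hmemStar w (by linarith) hwn, ?_⟩
      have hzw : z - w = -(min (ε/2) ((a-z)/2)) := by rw [hw]; ring
      rw [Real.dist_eq, hzw, abs_neg, abs_of_nonneg (le_of_lt hmpos)]
      linarith
    · exact subset_closure (h ▸ ha)
    · rw [Metric.mem_closure_iff]
      intro ε hε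
      set w := z - min (ε/2) ((z - a)/2) with hw
      have hmpos : 0 < min (ε/2) ((z-a)/2) := lt_min (by linarith) (by linarith)
      have hm1 : min (ε/2) ((z-a)/2) ≤ ε/2 := min_le_left _ _
      have hm2 : min (ε/2) ((z-a)/2) ≤ (z-a)/2 := min_le_right _ _
      have hw1 : w < z := by simp only [hw]; linarith
      have hw2 : a < w := by simp only [hw]; linarith
      have hwn : w ∉ S := by
        apply noS a w haS
        rw [Real.dist_eq, abs_of_nonpos (by linarith : a - w ≤ 0)]
        rw [abs_of_nonneg (by linarith : (0:ℝ) ≤ z - a)] at hle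
        linarith
      refine ⟨w, hmemStar w (by linarith) hwn, ?_⟩
      have hzw : z - w = min (ε/2) ((z-a)/2) := by rw [hw]; ring
      rw [Real.dist_eq, hzw, abs_of_nonneg (le_of_lt hmpos)]
      linarith
  -- positive frontier points lie in closure Sstar
  have hFclosS : ∀ f : ℝ, f ∈ frontier S → 0 < f → f ∈ closure Sstar := by
    intro f hf hfpos
    rw [Metric.mem_closure_iff]
    intro ε hε
    have hfc : f ∈ closure Sᶜ := by
      have h' := hf
      rw [frontier_eq_closure_inter_closure] at h'
      exact h'.2
    obtain ⟨w, hw, hwd⟩ := Metric.mem_closure_iff.mp hfc (min ε f) (lt_min hε hfpos)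
    have h1 := lt_of_lt_of_le hwd (min_le_left ε f)
    have h2 := lt_of_lt_of_le hwd (min_le_right ε f)
    rw [Real.dist_eq] at h2
    have h3 := abs_lt.mp h2
    have hwpos : 0 < w := by linarith [h3.2]
    exact ⟨w, hmemStar w (le_of_lt hwpos) hw, h1⟩
  -- main case analysis
  by_cases hxS : x ∈ S
  · by_cases hxI : x ∈ interior S
    · -- x in interior of S
      have hxnF : x ∉ frontier S := fun h => ((hSclosed.frontier_eq ▸ h).2 hxI)
      have hda_pos : 0 < Metric.infDist x (frontier S) :=
        (hFcl.notMem_iff_infDist_pos hFne).mp hxnF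
      by_cases hbS : x + sstar ∈ S
      · by_cases hbI : x + sstar ∈ interior S
        · -- both interior
          obtain ⟨f, hfF, hfd⟩ := hFcl.exists_infDist_eq_dist hFne x
          have hf0 : (0:ℝ) ≤ f := hSnn f (hFsubS hfF)
          have hp : f + sstar ∈ Sstar := by
            rcases eq_or_lt_of_le hf0 with h0 | h0
            · rw [← h0, zero_add]; exact hsstar
            · exact hT f (hFclosS f hfF h0)
          have hpnS : f + sstar ∉ S := hdisj _ hp
          have hkey : Metric.infDist (x+sstar) (frontier S) < dist x f := by
            rcases lt_trichotomy (x + sstar) (f + sstar) with h | h | h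
            · obtain ⟨g, hgF, hg1, hg2⟩ := crossR (x+sstar) (f+sstar) h hbS hpnS
              have h3 := Metric.infDist_le_dist_of_mem (x := x + sstar) hgF
              have h4 : dist (x+sstar) g = g - (x+sstar) := by
                rw [Real.dist_eq, abs_of_nonpos (by linarith : (x+sstar) - g ≤ 0)]; ring
              have h5 : dist x f = f - x := by
                rw [Real.dist_eq, abs_of_nonpos (by linarith : x - f ≤ 0)]; ring
              rw [h4] at h3; rw [h5]; linarith
            · exact absurd (h ▸ hbS) hpnS
            · obtain ⟨g, hgF, hg1, hg2⟩ := crossL (f+sstar) (x+sstar) h hpnS hbS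
              have h3 := Metric.infDist_le_dist_of_mem (x := x + sstar) hgF
              have h4 : dist (x+sstar) g = (x+sstar) - g := by
                rw [Real.dist_eq, abs_of_nonneg (by linarith : (0:ℝ) ≤ (x+sstar) - g)]
              have h5 : dist x f = x - f := by
                rw [Real.dist_eq, abs_of_nonneg (by linarith : (0:ℝ) ≤ x - f)]
              rw [h4] at h3; rw [h5]; linarith
          rw [hdef_int _ hbI, hdef_int _ hxI, hfd]
          exact hkey
        · -- x interior, x+sstar frontier
          have hbF : x + sstar ∈ frontier S := by
            rw [hSclosed.frontier_eq]; exact ⟨hbS, hbI⟩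
          rw [hdef_bd _ hbF, hdef_int _ hxI]
          exact hda_pos
      · -- x interior, x+sstar in Sstar
        have hbstar : x + sstar ∈ Sstar := hmemStar _ (by linarith) hbS
        rw [hdef_star _ hbstar, hdef_int _ hxI]
        have h3 : 0 ≤ Metric.infDist (x+sstar) (frontier S) := Metric.infDist_nonneg
        linarith
    · -- x on frontier
      have hxF : x ∈ frontier S := by
        rw [hSclosed.frontier_eq]; exact ⟨hxS, hxI⟩
      have hbstar : x + sstar ∈ Sstar := by
        rcases eq_or_lt_of_le hx with h0 | h0
        · rw [← h0, zero_add]; exact hsstar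
        · exact hT x (hFclosS x hxF h0)
      have hbnF : x + sstar ∉ frontier S := fun h => hdisj _ hbstar (hFsubS h)
      have hdb : 0 < Metric.infDist (x+sstar) (frontier S) :=
        (hFcl.notMem_iff_infDist_pos hFne).mp hbnF
      rw [hdef_star _ hbstar, hdef_bd x hxF]
      linarith
  · -- x in Sstar
    have hxstar : x ∈ Sstar := hmemStar x hx hxS
    have hbstar : x + sstar ∈ Sstar := hT x (subset_closure hxstar)
    rw [hdef_star _ hbstar, hdef_star _ hxstar]
    have hgoal : Metric.infDist x (frontier S) < Metric.infDist (x + sstar) (frontier S) := by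
      obtain ⟨f, hfF, hfd⟩ := hFcl.exists_infDist_eq_dist hFne (x + sstar)
      have hf0 : (0:ℝ) ≤ f := hSnn f (hFsubS hfF)
      have hdax : Metric.infDist x (frontier S) ≤ x := by
        have h := Metric.infDist_le_dist_of_mem (x := x) h0F
        rwa [Real.dist_eq, sub_zero, abs_of_nonneg hx] at h
      rw [hfd]
      by_cases hfs : f < sstar
      · have h5 : dist (x + sstar) f = x + sstar - f := by
          rw [Real.dist_eq, abs_of_nonneg (by linarith)]
        rw [h5]; linarith
      · push_neg at hfs
        have hz0 : (0:ℝ) ≤ f - sstar := by linarith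
        by_contra hcon
        push_neg at hcon
        have habs : |(f - sstar) - x| ≤ Metric.infDist x (frontier S) := by
          rw [Real.dist_eq] at hcon
          rw [show (f - sstar) - x = -(x + sstar - f) by ring, abs_neg]
          exact hcon
        have hzc : (f - sstar) ∈ closure Sstar := hclb x (f - sstar) hxstar hz0 habs
        have hfs' : f ∈ Sstar := by
          have h6 := hT (f - sstar) hzc
          rwa [sub_add_cancel] at h6
        exact hdisj _ hfs' (hFsubS hfF)
    linarith
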